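/- Let a be a regular scale factor with lim_{t→0⁺} a'(t) = 0 and a''(t) ≥ 0 on some interval (0,ε). Then for any τ > 0, lim_{t₀→0⁺} ∫_{t₀}^τ (a''(t)/a'(t)²)·dt/√(a(τ)²−a(t)²) = +∞. -/

import Mathlib

open Set MeasureTheory intervalIntegral

lemma aux_deriv_nonneg (a : ℝ → ℝ) (hmono : StrictMonoOn a (Set.Ici 0))
    {t : ℝ} (ht : 0 < t) (hdiff : DifferentiableAt ℝ a t) : 0 ≤ deriv a t := by
  have h := (hdiff.hasDerivAt.hasDerivWithinAt (s := Set.Ioi t))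
  rw [hasDerivWithinAt_iff_tendsto_slope' (by simp)] at h
  refine ge_of_tendsto h ?_
  filter_upwards [self_mem_nhdsWithin] with x hx
  have hx' : t < x := hx
  rw [slope_def_field]
  have : a t ≤ a x := (hmono (le_of_lt ht) (le_of_lt (ht.trans hx'))) hx' |>.le
  exact div_nonneg (by linarith) (by linarith)

lemma aux_deriv_pos (a : ℝ → ℝ) (ha0 : a 0 = 0) (hmono : StrictMonoOn a (Set.Ici 0))
    (hcont : ContinuousOn a (Set.Ici 0))
    (hsmooth : ContDiffOn ℝ 2 a (Set.Ioi 0))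
    (hreg : ∀ t > (0:ℝ), a t * deriv (deriv a) t / (deriv a t) ^ 2 ≤ 1)
    {s : ℝ} (hs : 0 < s) : 0 < deriv a s := by
  -- basic differentiability facts
  have hadiff : ∀ t ∈ Set.Ioi (0:ℝ), DifferentiableAt ℝ a t := fun t ht =>
    (hsmooth.differentiableOn (by norm_num)).differentiableAt (isOpen_Ioi.mem_nhds ht)
  have hd1 : ContDiffOn ℝ 1 (deriv a) (Set.Ioi 0) :=
    hsmooth.deriv_of_isOpen isOpen_Ioi (by norm_num)
  have hd'cont : ContinuousOn (deriv a) (Set.Ioi 0) := hd1.continuousOn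
  have hd'diff : ∀ t ∈ Set.Ioi (0:ℝ), DifferentiableAt ℝ (deriv a) t := fun t ht =>
    (hd1.differentiableOn (by norm_num)).differentiableAt (isOpen_Ioi.mem_nhds ht)
  have hnonneg : ∀ t ∈ Set.Ioi (0:ℝ), 0 ≤ deriv a t := fun t ht =>
    aux_deriv_nonneg a hmono ht (hadiff t ht)
  by_contra hneg
  have hs0 : deriv a s = 0 := le_antisymm (not_lt.mp hneg) (hnonneg s hs)
  -- find w > s with positive derivative
  obtain ⟨w, hw, hww⟩ := exists_hasDerivAt_eq_slope a (deriv a) (by linarith : s < s + 1)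
    (hcont.mono (fun x hx => le_trans hs.le hx.1))
    (fun x hx => (hadiff x (lt_trans hs hx.1)).hasDerivAt)
  have hwpos : 0 < deriv a w := by
    rw [hww]
    have : a s < a (s + 1) := hmono (Set.mem_Ici.mpr hs.le) (Set.mem_Ici.mpr (by linarith)) (by linarith)
    exact div_pos (by linarith) (by linarith)
  have hsw : s < w := hw.1
  -- the set of zeros of deriv a in [s, w]
  set K : Set ℝ := {t ∈ Set.Icc s w | deriv a t = 0} with hK
  have hKsub : K ⊆ Set.Icc s w := fun x hx => hx.1
  have hKclosed : IsClosed K := by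
    have : K = Set.Icc s w ∩ deriv a ⁻¹' {0} := by ext x; simp [hK, Set.mem_sep_iff]
    rw [this]
    exact ContinuousOn.preimage_isClosed_of_isClosed
      (hd'cont.mono (fun x hx => lt_of_lt_of_le hs hx.1)) isClosed_Icc isClosed_singleton
  have hKcpt : IsCompact K := isCompact_Icc.of_isClosed_subset hKclosed hKsub
  have hKne : K.Nonempty := ⟨s, ⟨le_rfl, hsw.le⟩, hs0⟩
  set u := sSup K with hu
  have huK : u ∈ K := hKcpt.sSup_mem hKne
  have hus : s ≤ u := huK.1.1
  have hupos : 0 < u := lt_of_lt_of_le hs hus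
  have huw : u < w := lt_of_le_of_ne huK.1.2 (fun h => by
    rw [h] at huK; exact hwpos.ne' huK.2)
  have hu0 : deriv a u = 0 := huK.2
  have hgt : ∀ t ∈ Set.Ioc u w, 0 < deriv a t := by
    intro t ht
    rcases (hnonneg t (lt_trans hupos ht.1)).lt_or_eq with h | h
    · exact h
    · exfalso
      have : t ∈ K := ⟨⟨le_trans hus ht.1.le, ht.2⟩, h.symm⟩
      exact absurd (le_csSup (hKcpt.bddAbove) this) (not_le.mpr ht.1)
  have hau : 0 < a u := by rw [← ha0]; exact hmono (Set.mem_Ici.mpr le_rfl) hupos.le hupos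
  -- the auxiliary monotone function
  set g : ℝ → ℝ := fun t => (deriv a t)⁻¹ + (a u)⁻¹ * t with hg
  have hIsub : Set.Ioc u w ⊆ Set.Ioi (0:ℝ) := fun x hx => lt_trans hupos hx.1
  have hgmono : MonotoneOn g (Set.Ioc u w) := by
    apply monotoneOn_of_deriv_nonneg (convex_Ioc u w)
    · exact ((hd'cont.mono hIsub).inv₀ (fun x hx => (hgt x hx).ne')).add
        (continuousOn_const.mul continuousOn_id)
    · intro x hx
      rw [interior_Ioc] at hx
      have hx' : x ∈ Set.Ioc u w := Set.Ioo_subset_Ioc_self hx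
      exact (((hd'diff x (hIsub hx')).inv (hgt x hx').ne').add
        ((differentiable_id.const_mul _).differentiableAt)).differentiableWithinAt
    · intro x hx
      rw [interior_Ioc] at hx
      have hx' : x ∈ Set.Ioc u w := Set.Ioo_subset_Ioc_self hx
      have hxpos : 0 < x := hIsub hx'
      have hd'x : 0 < deriv a x := hgt x hx'
      have hlin : HasDerivAt (fun t : ℝ => (a u)⁻¹ * t) ((a u)⁻¹) x := by
        simpa using (hasDerivAt_id x).const_mul ((a u)⁻¹)
      have hder : HasDerivAt g (-(deriv (deriv a) x) / (deriv a x) ^ 2 + (a u)⁻¹) x :=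
        (((hd'diff x hxpos).hasDerivAt).inv hd'x.ne').add hlin
      rw [hder.deriv]
      have hax : a u ≤ a x := (hmono hupos.le (hupos.trans hx'.1).le hx'.1).le
      have haxpos : 0 < a x := lt_of_lt_of_le hau hax
      have h1 : deriv (deriv a) x / (deriv a x) ^ 2 ≤ (a x)⁻¹ := by
        have h2 := hreg x hxpos
        rw [mul_div_assoc] at h2
        rw [inv_eq_one_div, le_div_iff₀ haxpos, mul_comm]
        exact h2
      have h3 : (a x)⁻¹ ≤ (a u)⁻¹ := by
        apply inv_anti₀ hau hax
      have : deriv (deriv a) x / (deriv a x) ^ 2 ≤ (a u)⁻¹ := le_trans h1 h3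
      rw [neg_div]
      linarith
  -- derive the contradiction
  have hbound : ∀ x ∈ Set.Ioc u w, (deriv a x)⁻¹ ≤ g w := by
    intro x hx
    have := hgmono hx (Set.right_mem_Ioc.mpr huw) hx.2
    have hxpos : 0 < x := hIsub hx
    have h2 : 0 ≤ (a u)⁻¹ * x := by positivity
    calc (deriv a x)⁻¹ ≤ g x := by simp [hg]; linarith
    _ ≤ g w := this
  have hgwpos : 0 < g w := lt_of_lt_of_le (inv_pos.mpr (hgt w ⟨huw, le_rfl⟩)) (hbound w ⟨huw, le_rfl⟩)
  -- find x near u with deriv a x small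
  have hcontu : ContinuousAt (deriv a) u := (hd1.continuousOn.continuousAt (isOpen_Ioi.mem_nhds hupos))
  have htend : Filter.Tendsto (deriv a) (nhdsWithin u (Set.Ioi u)) (nhds 0) := by
    rw [← hu0]
    exact hcontu.continuousWithinAt.tendsto
  have hev : ∀ᶠ x in nhdsWithin u (Set.Ioi u), deriv a x < (g w)⁻¹ :=
    htend (Iio_mem_nhds (inv_pos.mpr hgwpos))
  have hev2 : ∀ᶠ x in nhdsWithin u (Set.Ioi u), x ∈ Set.Ioc u w :=
    Ioc_mem_nhdsGT huw
  obtain ⟨x, hx1, hx2⟩ := (hev.and hev2).exists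
  have hdx : 0 < deriv a x := hgt x hx2
  have : g w < (deriv a x)⁻¹ := by
    rw [← inv_inv (g w)]
    exact inv_strictAnti₀ (by positivity) hx1
  exact absurd (hbound x hx2) (not_le.mpr this)

/-- If `a'(0⁺) = 0` and `a'' ≥ 0` near `0`, the integral
`∫_{t₀}^τ (a''/a'²)/√(a(τ)²−a(t)²) dt` diverges to `+∞` as `t₀ → 0⁺`. -/
theorem integral_diverges (a : ℝ → ℝ)
    (ha0 : a 0 = 0)
    (hmono : StrictMonoOn a (Set.Ici 0))
    (hcont : ContinuousOn a (Set.Ici 0))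
    (hsmooth : ContDiffOn ℝ 2 a (Set.Ioi 0))
    (hreg : ∀ t > (0:ℝ), a t * deriv (deriv a) t / (deriv a t) ^ 2 ≤ 1)
    (hderiv0 : Filter.Tendsto (deriv a) (nhdsWithin 0 (Set.Ioi 0)) (nhds 0))
    (ε : ℝ) (hε : 0 < ε)
    (hconv : ∀ t ∈ Set.Ioo (0:ℝ) ε, 0 ≤ deriv (deriv a) t) :
    ∀ τ > (0:ℝ),
      Filter.Tendsto
        (fun t₀ => ∫ t in t₀..τ,
          (deriv (deriv a) t / (deriv a t) ^ 2) / Real.sqrt ((a τ) ^ 2 - (a t) ^ 2))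
        (nhdsWithin 0 (Set.Ioi 0)) Filter.atTop := by
  intro τ hτ
  -- basic facts
  have hadiff : ∀ t ∈ Set.Ioi (0:ℝ), DifferentiableAt ℝ a t := fun t ht =>
    (hsmooth.differentiableOn (by norm_num)).differentiableAt (isOpen_Ioi.mem_nhds ht)
  have hd1 : ContDiffOn ℝ 1 (deriv a) (Set.Ioi 0) :=
    hsmooth.deriv_of_isOpen isOpen_Ioi (by norm_num)
  have hd'cont : ContinuousOn (deriv a) (Set.Ioi 0) := hd1.continuousOn
  have hd'diff : ∀ t ∈ Set.Ioi (0:ℝ), DifferentiableAt ℝ (deriv a) t := fun t ht =>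
    (hd1.differentiableOn (by norm_num)).differentiableAt (isOpen_Ioi.mem_nhds ht)
  have hd''cont : ContinuousOn (deriv (deriv a)) (Set.Ioi 0) :=
    hd1.continuousOn_deriv_of_isOpen isOpen_Ioi le_rfl
  have hd'pos : ∀ t ∈ Set.Ioi (0:ℝ), 0 < deriv a t := fun t ht =>
    aux_deriv_pos a ha0 hmono hcont hsmooth hreg ht
  have hapos : ∀ t : ℝ, 0 < t → 0 < a t := fun t ht => by
    rw [← ha0]; exact hmono (Set.mem_Ici.mpr le_rfl) (Set.mem_Ici.mpr ht.le) ht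
  have haτ : 0 < a τ := hapos τ hτ
  have hamono : ∀ x y : ℝ, 0 ≤ x → x ≤ y → a x ≤ a y := fun x y hx hxy => by
    rcases hxy.lt_or_eq with h | h
    · exact (hmono (Set.mem_Ici.mpr hx) (Set.mem_Ici.mpr (hx.trans hxy)) h).le
    · rw [h]
  set δ := min ε τ / 2 with hδ
  have hδpos : 0 < δ := by positivity
  have hδε : δ < ε := by
    rw [hδ]; rcases min_le_iff.mpr (Or.inl (le_refl ε)) with h; cases' le_total ε τ with h' h' <;>
      simp [min_def, h'] <;> linarith
  have hδτ : δ < τ := by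
    rw [hδ]; cases' le_total ε τ with h' h' <;> simp [min_def, h'] <;> linarith
  set f : ℝ → ℝ := fun t =>
    (deriv (deriv a) t / (deriv a t) ^ 2) / Real.sqrt ((a τ) ^ 2 - (a t) ^ 2) with hf
  set q : ℝ → ℝ := fun t => deriv (deriv a) t / (deriv a t) ^ 2 with hq
  have hqcont : ContinuousOn q (Set.Ioi 0) :=
    hd''cont.div (hd'cont.pow 2) (fun t ht => pow_ne_zero 2 (hd'pos t ht).ne')
  have hsqrtpos : ∀ t ∈ Set.Icc (0:ℝ) δ, 0 < Real.sqrt ((a τ) ^ 2 - (a t) ^ 2) := by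
    intro t ht
    apply Real.sqrt_pos.mpr
    have h1 : a t < a τ := hmono (Set.mem_Ici.mpr ht.1) (Set.mem_Ici.mpr hτ.le)
      (lt_of_le_of_lt ht.2 hδτ)
    have h2 : 0 ≤ a t := by rw [← ha0]; exact hamono 0 t le_rfl ht.1
    nlinarith
  have hfcont : ∀ x ∈ Set.Ioo (0:ℝ) δ, ContinuousOn f (Set.Icc x δ) := by
    intro x hx
    have hsub : Set.Icc x δ ⊆ Set.Ioi 0 := fun y hy => lt_of_lt_of_le hx.1 hy.1
    apply (hqcont.mono hsub).div
    · exact Real.continuous_sqrt.comp_continuousOn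
        (continuousOn_const.sub (((hcont.mono (fun y hy => Set.mem_Ici.mpr (le_of_lt (hsub hy)))).pow 2)))
    · intro t ht
      exact (hsqrtpos t ⟨(hx.1.trans_le ht.1).le, ht.2⟩).ne'
  have hint1 : ∀ x ∈ Set.Ioo (0:ℝ) δ, IntervalIntegrable f volume x δ := fun x hx =>
    (hfcont x hx).intervalIntegrable_of_Icc hx.2.le
  have hsubδτ : Set.Icc δ τ ⊆ Set.Ioi 0 := fun y hy => lt_of_lt_of_le hδpos hy.1
  -- minimum of deriv a on [δ, τ]
  obtain ⟨c, hc, hcmin⟩ := isCompact_Icc.exists_isMinOn (Set.nonempty_Icc.mpr hδτ.le)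
    (hd'cont.mono hsubδτ)
  set m := deriv a c with hm
  have hmpos : 0 < m := hd'pos c (hsubδτ hc)
  have hcmin' : ∀ t ∈ Set.Icc δ τ, m ≤ deriv a t := fun t ht => hcmin ht
  -- mean value bound : a τ - a t ≥ m (τ - t) on [δ, τ]
  have hslope : ∀ t ∈ Set.Icc δ τ, m * (τ - t) ≤ a τ - a t := by
    intro t ht
    have hFmono : MonotoneOn (fun t => a t - m * t) (Set.Icc δ τ) := by
      apply monotoneOn_of_deriv_nonneg (convex_Icc δ τ)
      · exact (hcont.mono (fun y hy => Set.mem_Ici.mpr (le_of_lt (hsubδτ hy)))).sub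
          (continuousOn_const.mul continuousOn_id)
      · intro x hx
        rw [interior_Icc] at hx
        have hx' : x ∈ Set.Ioi (0:ℝ) := hsubδτ (Set.Ioo_subset_Icc_self hx)
        exact ((hadiff x hx').sub ((differentiable_id.const_mul m).differentiableAt)).differentiableWithinAt
      · intro x hx
        rw [interior_Icc] at hx
        have hx' : x ∈ Set.Ioi (0:ℝ) := hsubδτ (Set.Ioo_subset_Icc_self hx)
        have hlin : HasDerivAt (fun t : ℝ => m * t) m x := by
          simpa using (hasDerivAt_id x).const_mul m
        have hder : HasDerivAt (fun t => a t - m * t) (deriv a x - m) x :=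
          (hadiff x hx').hasDerivAt.sub hlin
        rw [hder.deriv]
        have := hcmin' x (Set.Ioo_subset_Icc_self hx)
        linarith
    have := hFmono ht (Set.right_mem_Icc.mpr hδτ.le) ht.2
    simp only at this
    linarith
  -- bound for q on [δ, τ]
  obtain ⟨M, hM⟩ := isCompact_Icc.exists_bound_of_continuousOn (hqcont.mono hsubδτ)
  have hMpos : 0 ≤ M := le_trans (norm_nonneg _) (hM δ (Set.left_mem_Icc.mpr hδτ.le))
  set C0 := M / Real.sqrt (m * a τ) with hC0
  -- integrability of the dominating function
  have hdom : IntervalIntegrable (fun t => C0 * (τ - t) ^ (-(1/2):ℝ)) volume δ τ := by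
    have h := (intervalIntegral.intervalIntegrable_rpow' (r := -(1/2))
      (a := 0) (b := τ - δ) (by norm_num)).comp_sub_left τ
    simp only [sub_zero, sub_sub_cancel] at h
    exact (h.const_mul C0).symm
  -- a.e. measurability of f on (δ, τ]
  have haesm : AEStronglyMeasurable f (volume.restrict (Set.uIoc δ τ)) := by
    rw [Set.uIoc_of_le hδτ.le]
    have hqmeas : Measurable q := (measurable_deriv _).div ((measurable_deriv _).pow_const 2)
    have hscont : ContinuousOn (fun t => Real.sqrt ((a τ) ^ 2 - (a t) ^ 2)) (Set.Ioc δ τ) :=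
      Real.continuous_sqrt.comp_continuousOn (continuousOn_const.sub
        (((hcont.mono (fun y hy => le_of_lt (lt_of_lt_of_le hδpos hy.1.le))).pow 2)))
    exact ((hqmeas.aemeasurable.div
      (hscont.aemeasurable measurableSet_Ioc)).congr (by rfl)).aestronglyMeasurable
  -- domination
  have hbound : ∀ t ∈ Set.Ioc δ τ, ‖f t‖ ≤ ‖C0 * (τ - t) ^ (-(1/2):ℝ)‖ := by
    intro t ht
    rcases eq_or_lt_of_le ht.2 with heq | hlt
    · have : f t = 0 := by
        simp [hf, heq, Real.sqrt_zero]
      rw [this]; simp only [norm_zero]; positivity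
    · have htIcc : t ∈ Set.Icc δ τ := ⟨ht.1.le, ht.2⟩
      have hat : 0 < a t := hapos t (hsubδτ htIcc)
      have h1 : m * (τ - t) ≤ a τ - a t := hslope t htIcc
      have hge : 0 ≤ a τ - a t := le_trans (by nlinarith) h1
      have h2 : m * (τ - t) * a τ ≤ (a τ) ^ 2 - (a t) ^ 2 := by
        nlinarith [mul_le_mul_of_nonneg_right h1 haτ.le, mul_nonneg hge hat.le]
      have hs1 : Real.sqrt (m * a τ) * Real.sqrt (τ - t)
          ≤ Real.sqrt ((a τ) ^ 2 - (a t) ^ 2) := by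
        rw [← Real.sqrt_mul (by positivity)]
        apply Real.sqrt_le_sqrt
        nlinarith
      have hsqpos : 0 < Real.sqrt (m * a τ) * Real.sqrt (τ - t) := by
        apply mul_pos (Real.sqrt_pos.mpr (by positivity)) (Real.sqrt_pos.mpr (by linarith))
      have hfd : ‖f t‖ = ‖q t‖ / Real.sqrt ((a τ) ^ 2 - (a t) ^ 2) := by
        have hrfl : f t = q t / Real.sqrt ((a τ) ^ 2 - (a t) ^ 2) := rfl
        rw [hrfl, Real.norm_eq_abs, abs_div, abs_of_nonneg (Real.sqrt_nonneg _),
          Real.norm_eq_abs]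
      rw [hfd]
      have key : ‖q t‖ / Real.sqrt ((a τ) ^ 2 - (a t) ^ 2)
          ≤ M / (Real.sqrt (m * a τ) * Real.sqrt (τ - t)) :=
        div_le_div₀ hMpos (hM t htIcc) hsqpos hs1
      apply le_trans key
      have hrw : (τ - t) ^ (-(1/2):ℝ) = (Real.sqrt (τ - t))⁻¹ := by
        rw [Real.sqrt_eq_rpow, ← Real.rpow_neg (by linarith)]
      rw [hrw, hC0]
      rw [div_mul_eq_div_div, ← div_eq_mul_inv, div_div]
      exact le_abs_self _
  have hint2 : IntervalIntegrable f volume δ τ := by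
    apply hdom.mono_fun haesm
    rw [Filter.EventuallyLE, Set.uIoc_of_le hδτ.le, ae_restrict_iff' measurableSet_Ioc]
    exact ae_of_all _ hbound
  -- FTC on [x, δ]
  have hqint : ∀ x ∈ Set.Ioo (0:ℝ) δ, IntervalIntegrable q volume x δ := fun x hx =>
    (hqcont.mono (fun y hy => lt_of_lt_of_le hx.1 hy.1)).intervalIntegrable_of_Icc hx.2.le
  have hFTC : ∀ x ∈ Set.Ioo (0:ℝ) δ,
      (∫ t in x..δ, q t) = (deriv a x)⁻¹ - (deriv a δ)⁻¹ := by
    intro x hx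
    have heq : (∫ t in x..δ, q t)
        = (fun t => -(deriv a t)⁻¹) δ - (fun t => -(deriv a t)⁻¹) x := by
      refine intervalIntegral.integral_eq_sub_of_hasDerivAt
        (f := fun t => -(deriv a t)⁻¹) (f' := q) (fun t ht => ?_) (hqint x hx)
      · 
        rw [Set.uIcc_of_le hx.2.le] at ht
        have htpos : t ∈ Set.Ioi (0:ℝ) := lt_of_lt_of_le hx.1 ht.1
        have h := ((hd'diff t htpos).hasDerivAt.inv (hd'pos t htpos).ne').neg
        convert h using 1
        · rfl
        · rw [hq]
          simp [neg_div]
    rw [heq]; ring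
  -- comparison on [x, δ]
  have hlow : ∀ x ∈ Set.Ioo (0:ℝ) δ,
      (a τ)⁻¹ * ((deriv a x)⁻¹ - (deriv a δ)⁻¹) ≤ ∫ t in x..δ, f t := by
    intro x hx
    have hmono2 : (∫ t in x..δ, (a τ)⁻¹ * q t) ≤ ∫ t in x..δ, f t := by
      apply intervalIntegral.integral_mono_on hx.2.le ((hqint x hx).const_mul _) (hint1 x hx)
      intro t ht
      have htpos : (0:ℝ) < t := lt_of_lt_of_le hx.1 ht.1
      have hqnn : 0 ≤ q t := by
        rw [hq]
        exact div_nonneg (hconv t ⟨htpos, lt_of_le_of_lt ht.2 hδε⟩) (by positivity)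
      have hspos : 0 < Real.sqrt ((a τ) ^ 2 - (a t) ^ 2) :=
        hsqrtpos t ⟨htpos.le, ht.2⟩
      have hsle : Real.sqrt ((a τ) ^ 2 - (a t) ^ 2) ≤ a τ := by
        calc Real.sqrt ((a τ) ^ 2 - (a t) ^ 2) ≤ Real.sqrt ((a τ) ^ 2) :=
              Real.sqrt_le_sqrt (by nlinarith)
        _ = a τ := Real.sqrt_sq haτ.le
      have hrfl : f t = q t / Real.sqrt ((a τ) ^ 2 - (a t) ^ 2) := rfl
      rw [hrfl, inv_mul_eq_div]
      rw [div_le_div_iff₀ haτ hspos]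
      exact mul_le_mul_of_nonneg_left hsle hqnn
    calc (a τ)⁻¹ * ((deriv a x)⁻¹ - (deriv a δ)⁻¹)
        = (a τ)⁻¹ * ∫ t in x..δ, q t := by rw [hFTC x hx]
      _ = ∫ t in x..δ, (a τ)⁻¹ * q t := (intervalIntegral.integral_const_mul _ _).symm
      _ ≤ ∫ t in x..δ, f t := hmono2
  -- splitting
  have hsplit : ∀ x ∈ Set.Ioo (0:ℝ) δ,
      (∫ t in x..τ, f t) = (∫ t in x..δ, f t) + ∫ t in δ..τ, f t := fun x hx =>
    (intervalIntegral.integral_add_adjacent_intervals (hint1 x hx) hint2).symm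
  -- the lower bound tends to atTop
  have h0 : Filter.Tendsto (deriv a) (nhdsWithin 0 (Set.Ioi 0)) (nhdsWithin 0 (Set.Ioi 0)) :=
    tendsto_nhdsWithin_of_tendsto_nhds_of_eventually_within _ hderiv0
      (eventually_nhdsWithin_of_forall fun x hx => hd'pos x hx)
  have h1 : Filter.Tendsto (fun x => (deriv a x)⁻¹) (nhdsWithin 0 (Set.Ioi 0)) Filter.atTop :=
    tendsto_inv_nhdsGT_zero.comp h0
  have h2 : Filter.Tendsto (fun x => (deriv a x)⁻¹ + -(deriv a δ)⁻¹)
      (nhdsWithin 0 (Set.Ioi 0)) Filter.atTop :=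
    Filter.tendsto_atTop_add_const_right _ _ h1
  have h3 : Filter.Tendsto (fun x => (a τ)⁻¹ * ((deriv a x)⁻¹ + -(deriv a δ)⁻¹))
      (nhdsWithin 0 (Set.Ioi 0)) Filter.atTop :=
    h2.const_mul_atTop (inv_pos.mpr haτ)
  have h4 : Filter.Tendsto
      (fun x => (a τ)⁻¹ * ((deriv a x)⁻¹ + -(deriv a δ)⁻¹) + ∫ t in δ..τ, f t)
      (nhdsWithin 0 (Set.Ioi 0)) Filter.atTop :=
    Filter.tendsto_atTop_add_const_right _ _ h3
  apply Filter.tendsto_atTop_mono' _ _ h4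
  filter_upwards [Ioo_mem_nhdsGT hδpos] with x hx
  rw [hsplit x hx]
  have := hlow x hx
  have hle : (a τ)⁻¹ * ((deriv a x)⁻¹ + -(deriv a δ)⁻¹) ≤ ∫ t in x..δ, f t := by
    rw [← sub_eq_add_neg]; exact this
  exact add_le_add_left hle _
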